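/- arXiv:2504.00004 — 2 statements merged into one kernel-verified Lean document; each statement's English description precedes it below -/
import Mathlib

section
/- For every natural number n, ∑_{k=1}^{n} (−1)^{k−1} · (C(n,k)/(k+1)) · H_k² = (3·H_n^{(2)} − H_n²) / (2(n+1)), as an identity of real numbers. -/
open Finset

noncomputable def H : ℕ → ℝ := fun m => ∑ j ∈ range m, (1 : ℝ) / (j + 1)
noncomputable def H2 : ℕ → ℝ := fun m => ∑ j ∈ range m, (1 : ℝ) / ((j : ℝ) + 1) ^ 2

lemma Hsucc (m : ℕ) : H (m+1) = H m + 1/((m:ℝ)+1) := by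
  simp [H, Finset.sum_range_succ]

lemma H2succ (m : ℕ) : H2 (m+1) = H2 m + 1/((m:ℝ)+1)^2 := by
  simp [H2, Finset.sum_range_succ]

lemma Hpred (j : ℕ) : H (j-1) = H j - 1/(j:ℝ) := by
  cases j with
  | zero => simp [H]
  | succ i => rw [Hsucc]; push_cast; ring

lemma myflip (m : ℕ) (c g : ℕ → ℝ) (h0 : g 0 = 0) :
    ∑ j ∈ range m, (-1:ℝ)^j * c j * g j = -∑ j ∈ range m, (-1:ℝ)^(j-1) * c j * g j := by
  rw [← Finset.sum_neg_distrib]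
  apply Finset.sum_congr rfl
  intro j _
  cases j with
  | zero => simp [h0]
  | succ i => simp only [Nat.succ_sub_one, pow_succ]; ring

lemma absorb (m k : ℕ) : (m.choose k : ℝ) / ((k:ℝ)+1) = ((m+1).choose (k+1) : ℝ) / ((m:ℝ)+1) := by
  have h := Nat.add_one_mul_choose_eq m k
  have h' : ((m:ℝ)+1) * (m.choose k : ℝ) = ((m+1).choose (k+1) : ℝ) * ((k:ℝ)+1) := by
    exact_mod_cast h
  rw [div_eq_div_iff (by positivity) (by positivity)]
  linarith

lemma sum_shift (m : ℕ) (f : ℕ → ℝ) (h0 : f 0 = 0) :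
    ∑ j ∈ range (m+1), (-1:ℝ)^(j-1) * (m.choose j : ℝ) * f j
      = ∑ i ∈ range m, (-1:ℝ)^i * (m.choose (i+1) : ℝ) * f (i+1) := by
  rw [Finset.sum_range_succ']
  simp [h0]

lemma key (m : ℕ) (f : ℕ → ℝ) (h0 : f 0 = 0) :
    ∑ j ∈ range (m+2), (-1:ℝ)^(j-1) * ((m+1).choose j : ℝ) * f j
      = ∑ j ∈ range (m+1), (-1:ℝ)^(j-1) * (m.choose j : ℝ) * f j
        + ∑ i ∈ range (m+1), (-1:ℝ)^i * (m.choose i : ℝ) * f (i+1) := by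
  rw [sum_shift (m+1) f h0, sum_shift m f h0]
  have hz : ∑ i ∈ range (m+1), (-1:ℝ)^i * (m.choose (i+1) : ℝ) * f (i+1)
      = ∑ i ∈ range m, (-1:ℝ)^i * (m.choose (i+1) : ℝ) * f (i+1) := by
    rw [Finset.sum_range_succ]; simp
  rw [← hz, ← Finset.sum_add_distrib]
  apply Finset.sum_congr rfl
  intro i _
  have : ((m+1).choose (i+1) : ℝ) = (m.choose i : ℝ) + (m.choose (i+1) : ℝ) := by
    rw [Nat.choose_succ_succ]; push_cast; ring
  rw [this]; ring

lemma altR (m : ℕ) : ∑ j ∈ range (m+1), (-1:ℝ)^j * (m.choose j : ℝ) = if m = 0 then 1 else 0 := by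
  have h := Int.alternating_sum_range_choose (n := m)
  have : ((∑ j ∈ range (m+1), ((-1:ℤ)^j * (m.choose j : ℤ)) : ℤ) : ℝ)
      = ∑ j ∈ range (m+1), (-1:ℝ)^j * (m.choose j : ℝ) := by
    push_cast
    exact Finset.sum_congr rfl fun x _ => by ring
  rw [← this, h]
  split <;> simp [mul_comm]

lemma Esum (m : ℕ) : ∑ i ∈ range (m+1), (-1:ℝ)^i * ((m+1).choose (i+1) : ℝ) = 1 := by
  have h := altR (m+1)
  rw [if_neg (Nat.succ_ne_zero m)] at h
  rw [Finset.sum_range_succ'] at h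
  simp only [pow_succ, Nat.choose_zero_right, Nat.cast_one, pow_zero, one_mul] at h
  have : ∑ i ∈ range (m+1), (-1:ℝ)^i * (-1) * ((m+1).choose (i+1) : ℝ) 
      = -∑ i ∈ range (m+1), (-1:ℝ)^i * ((m+1).choose (i+1) : ℝ) := by
    rw [← Finset.sum_neg_distrib]; apply Finset.sum_congr rfl; intro i _; ring
  rw [this] at h
  linarith

lemma E (m : ℕ) : ∑ i ∈ range (m+1), (-1:ℝ)^i * (m.choose i : ℝ) * (1/((i:ℝ)+1)) = 1/((m:ℝ)+1) := by
  have : ∀ i ∈ range (m+1), (-1:ℝ)^i * (m.choose i : ℝ) * (1/((i:ℝ)+1))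
      = ((-1:ℝ)^i * ((m+1).choose (i+1) : ℝ)) * (1/((m:ℝ)+1)) := by
    intro i _
    have := absorb m i
    rw [mul_assoc, mul_one_div, this]
    ring
  rw [Finset.sum_congr rfl this, ← Finset.sum_mul, Esum, one_mul]

lemma L1 (m : ℕ) : ∑ j ∈ range (m+1), (-1:ℝ)^(j-1) * (m.choose j : ℝ) * (1/(j:ℝ)) = H m := by
  induction m with
  | zero => simp [H]
  | succ m ih =>
    rw [key m (fun j => 1/(j:ℝ)) (by simp), ih]
    have : ∀ i ∈ range (m+1), (-1:ℝ)^i * (m.choose i : ℝ) * (1/(((i:ℕ)+1:ℕ):ℝ))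
        = (-1:ℝ)^i * (m.choose i : ℝ) * (1/((i:ℝ)+1)) := by
      intro i _; push_cast; ring
    rw [Finset.sum_congr rfl this, E, Hsucc]

lemma S1 (m : ℕ) : ∑ i ∈ range (m+1), (-1:ℝ)^i * ((m+1).choose (i+1) : ℝ) * (1/((i:ℝ)+1)) = H (m+1) := by
  have h := sum_shift (m+1) (fun j => (1:ℝ)/(j:ℝ)) (by simp)
  rw [L1] at h
  push_cast at h
  exact h.symm

lemma X1 (m : ℕ) : ∑ i ∈ range (m+1), (-1:ℝ)^i * (m.choose i : ℝ) * (1/((i:ℝ)+1)^2)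
    = H (m+1) / ((m:ℝ)+1) := by
  have : ∀ i ∈ range (m+1), (-1:ℝ)^i * (m.choose i : ℝ) * (1/((i:ℝ)+1)^2)
      = ((-1:ℝ)^i * ((m+1).choose (i+1) : ℝ) * (1/((i:ℝ)+1))) * (1/((m:ℝ)+1)) := by
    intro i _
    rw [show (1:ℝ)/((i:ℝ)+1)^2 = (1/((i:ℝ)+1)) * (1/((i:ℝ)+1)) from by
      rw [div_mul_div_comm, one_mul, sq]]
    rw [show (-1:ℝ)^i * (m.choose i : ℝ) * ((1/((i:ℝ)+1)) * (1/((i:ℝ)+1)))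
        = ((m.choose i : ℝ)/((i:ℝ)+1)) * ((-1:ℝ)^i * (1/((i:ℝ)+1))) from by ring, absorb m i]
    ring
  rw [Finset.sum_congr rfl this, ← Finset.sum_mul, S1]
  ring

lemma L2 (m : ℕ) : ∑ j ∈ range (m+1), (-1:ℝ)^(j-1) * (m.choose j : ℝ) * (1/(j:ℝ)^2)
    = (H m ^ 2 + H2 m) / 2 := by
  induction m with
  | zero => simp [H, H2]
  | succ m ih =>
    rw [key m (fun j => 1/(j:ℝ)^2) (by simp), ih]
    push_cast
    rw [X1, Hsucc, H2succ]
    have hm : ((m:ℝ)+1) ≠ 0 := by positivity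
    field_simp
    ring

lemma H0 : H 0 = 0 := by simp [H]

lemma L3 (m : ℕ) : ∑ j ∈ range (m+2), (-1:ℝ)^(j-1) * ((m+1).choose j : ℝ) * H j
    = 1/((m:ℝ)+1) := by
  induction m with
  | zero =>
    rw [Finset.sum_range_succ, Finset.sum_range_succ, Finset.sum_range_zero]
    simp [H, Finset.sum_range_succ]
  | succ m ih =>
    rw [key (m+1) H H0, ih]
    have hsplit : ∀ i ∈ range (m+2), (-1:ℝ)^i * ((m+1).choose i : ℝ) * H (i+1)
        = (-1:ℝ)^i * ((m+1).choose i : ℝ) * H i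
          + (-1:ℝ)^i * ((m+1).choose i : ℝ) * (1/((i:ℝ)+1)) := by
      intro i _
      rw [Hsucc]; ring
    rw [Finset.sum_congr rfl hsplit, Finset.sum_add_distrib,
      myflip (m+2) (fun i => ((m+1).choose i : ℝ)) H H0, ih, E (m+1)]
    push_cast
    have h1 : ((m:ℝ)+1) ≠ 0 := by positivity
    have h2 : ((m:ℝ)+2) ≠ 0 := by positivity
    field_simp
    ring

lemma S3 (m : ℕ) : ∑ i ∈ range (m+1), (-1:ℝ)^i * ((m+1).choose (i+1) : ℝ) * H (i+1)
    = 1/((m:ℝ)+1) := by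
  have h := sum_shift (m+1) H H0
  rw [L3] at h
  exact h.symm

lemma X2 (m : ℕ) : ∑ i ∈ range (m+1), (-1:ℝ)^i * (m.choose i : ℝ) * (H (i+1)/((i:ℝ)+1))
    = 1/(((m:ℝ)+1)^2) := by
  have : ∀ i ∈ range (m+1), (-1:ℝ)^i * (m.choose i : ℝ) * (H (i+1)/((i:ℝ)+1))
      = ((-1:ℝ)^i * ((m+1).choose (i+1) : ℝ) * H (i+1)) * (1/((m:ℝ)+1)) := by
    intro i _
    rw [show (-1:ℝ)^i * (m.choose i : ℝ) * (H (i+1)/((i:ℝ)+1))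
        = ((m.choose i : ℝ)/((i:ℝ)+1)) * ((-1:ℝ)^i * H (i+1)) from by ring, absorb m i]
    ring
  rw [Finset.sum_congr rfl this, ← Finset.sum_mul, S3]
  rw [sq]
  rw [div_mul_div_comm, one_mul]

lemma L4 (m : ℕ) : ∑ j ∈ range (m+1), (-1:ℝ)^(j-1) * (m.choose j : ℝ) * (H j/(j:ℝ))
    = H2 m := by
  induction m with
  | zero => simp [H, H2]
  | succ m ih =>
    rw [key m (fun j => H j/(j:ℝ)) (by simp [H0]), ih]
    push_cast
    rw [X2, H2succ]

lemma SB (m : ℕ) : ∑ i ∈ range (m+2), (-1:ℝ)^i * ((m+2).choose (i+1) : ℝ) * H i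
    = 1/((m:ℝ)+2) - H (m+2) := by
  have h := sum_shift (m+2) (fun j => H (j-1)) (by simp [H0])
  simp only [Nat.add_sub_cancel] at h
  have hsplit : ∀ j ∈ range (m+3), (-1:ℝ)^(j-1) * ((m+2).choose j : ℝ) * H (j-1)
      = (-1:ℝ)^(j-1) * ((m+2).choose j : ℝ) * H j
        - (-1:ℝ)^(j-1) * ((m+2).choose j : ℝ) * (1/(j:ℝ)) := by
    intro j _
    rw [Hpred]; ring
  rw [Finset.sum_congr rfl hsplit, Finset.sum_sub_distrib, L3 (m+1), L1 (m+2)] at h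
  push_cast at h
  rw [← h]; ring_nf

lemma X3 (m : ℕ) : ∑ i ∈ range (m+2), (-1:ℝ)^i * ((m+1).choose i : ℝ) * (H i/((i:ℝ)+1))
    = (1/((m:ℝ)+2) - H (m+2)) / ((m:ℝ)+2) := by
  have : ∀ i ∈ range (m+2), (-1:ℝ)^i * ((m+1).choose i : ℝ) * (H i/((i:ℝ)+1))
      = ((-1:ℝ)^i * ((m+2).choose (i+1) : ℝ) * H i) * (1/((m:ℝ)+2)) := by
    intro i _
    rw [show (-1:ℝ)^i * ((m+1).choose i : ℝ) * (H i/((i:ℝ)+1))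
        = (((m+1).choose i : ℝ)/((i:ℝ)+1)) * ((-1:ℝ)^i * H i) from by ring, absorb (m+1) i]
    push_cast
    ring
  rw [Finset.sum_congr rfl this, ← Finset.sum_mul, SB]
  ring

lemma L5 (m : ℕ) : ∑ j ∈ range (m+2), (-1:ℝ)^(j-1) * ((m+1).choose j : ℝ) * (H j)^2
    = 2/(((m:ℝ)+1)^2) - H (m+1)/((m:ℝ)+1) := by
  induction m with
  | zero =>
    rw [Finset.sum_range_succ, Finset.sum_range_succ, Finset.sum_range_zero]
    simp [H, Finset.sum_range_succ]
    norm_num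
  | succ m ih =>
    rw [key (m+1) (fun j => H j ^ 2) (by simp [H0])]
    have hsplit : ∀ i ∈ range (m+2), (-1:ℝ)^i * ((m+1).choose i : ℝ) * (H (i+1))^2
        = (-1:ℝ)^i * ((m+1).choose i : ℝ) * (H i)^2
          + ((-1:ℝ)^i * ((m+1).choose i : ℝ) * (H i/((i:ℝ)+1))) * 2
          + (-1:ℝ)^i * ((m+1).choose i : ℝ) * (1/((i:ℝ)+1)^2) := by
      intro i _
      rw [Hsucc, show (1:ℝ)/((i:ℝ)+1)^2 = (1/((i:ℝ)+1)) * (1/((i:ℝ)+1)) from by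
        rw [div_mul_div_comm, one_mul, sq]]
      ring
    rw [Finset.sum_congr rfl hsplit, Finset.sum_add_distrib, Finset.sum_add_distrib,
      ← Finset.sum_mul,
      myflip (m+2) (fun i => ((m+1).choose i : ℝ)) (fun j => H j ^ 2) (by simp [H0]),
      ih, X3, X1 (m+1)]
    have e1 : H (m+1+1) = H (m+2) := rfl
    have e2 : (((m+1:ℕ)):ℝ) = (m:ℝ)+1 := by push_cast; ring
    rw [e1, e2]
    have h1 : ((m:ℝ)+1) ≠ 0 := by positivity
    have h2 : ((m:ℝ)+2) ≠ 0 := by positivity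
    field_simp
    ring

theorem stmt_8 (n : ℕ) :
    ∑ k ∈ Icc 1 n, (-1 : ℝ) ^ (k - 1) * ((Nat.choose n k : ℝ) / ((k : ℝ) + 1)) * H k ^ 2 =
      (3 * H2 n - H n ^ 2) / (2 * ((n : ℝ) + 1)) := by
  have hT : ∑ j ∈ range (n+2), (-1:ℝ)^(j-1) * ((n+1).choose j : ℝ) * (H (j-1))^2
      = (2/(((n:ℝ)+1)^2) - H (n+1)/((n:ℝ)+1)) - H2 (n+1) * 2 + (H (n+1)^2 + H2 (n+1))/2 := by
    have hsplit : ∀ j ∈ range (n+2), (-1:ℝ)^(j-1) * ((n+1).choose j : ℝ) * (H (j-1))^2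
        = (-1:ℝ)^(j-1) * ((n+1).choose j : ℝ) * (H j)^2
          - ((-1:ℝ)^(j-1) * ((n+1).choose j : ℝ) * (H j/(j:ℝ))) * 2
          + (-1:ℝ)^(j-1) * ((n+1).choose j : ℝ) * (1/(j:ℝ)^2) := by
      intro j _
      rw [Hpred, show (1:ℝ)/(j:ℝ)^2 = (1/(j:ℝ)) * (1/(j:ℝ)) from by
        rw [div_mul_div_comm, one_mul, sq]]
      ring
    rw [Finset.sum_congr rfl hsplit, Finset.sum_add_distrib, Finset.sum_sub_distrib,
      ← Finset.sum_mul, L5 n, L4 (n+1), L2 (n+1)]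
  have hS := sum_shift (n+1) (fun j => (H (j-1))^2) (by simp [H0])
  simp only [Nat.add_sub_cancel] at hS
  rw [hT] at hS
  have hpt : ∀ k ∈ range (n+1), (-1:ℝ)^(k-1) * ((n.choose k : ℝ)/((k:ℝ)+1)) * H k ^ 2
      = ((-1:ℝ)^k * ((n+1).choose (k+1) : ℝ) * H k ^ 2) * (-(1/((n:ℝ)+1))) := by
    intro k _
    cases k with
    | zero => simp [H0]
    | succ i =>
      rw [absorb n (i+1)]
      simp only [Nat.succ_sub_one]
      rw [pow_succ]
      ring
  have hn : ((n:ℝ)+1) ≠ 0 := by positivity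
  calc ∑ k ∈ Icc 1 n, (-1 : ℝ) ^ (k - 1) * ((Nat.choose n k : ℝ) / ((k : ℝ) + 1)) * H k ^ 2
      = ∑ k ∈ range (n+1), (-1 : ℝ) ^ (k - 1) * ((Nat.choose n k : ℝ) / ((k : ℝ) + 1)) * H k ^ 2 := by
        rw [show (Icc 1 n) = Ico 1 (n+1) from (Finset.Ico_add_one_right_eq_Icc 1 n).symm,
          Finset.range_eq_Ico, Finset.sum_eq_sum_Ico_succ_bot (Nat.succ_pos n)]
        simp [H0]
    _ = (∑ k ∈ range (n+1), (-1:ℝ)^k * ((n+1).choose (k+1) : ℝ) * H k ^ 2) * (-(1/((n:ℝ)+1))) := by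
        rw [Finset.sum_congr rfl hpt, ← Finset.sum_mul]
    _ = ((2/(((n:ℝ)+1)^2) - H (n+1)/((n:ℝ)+1)) - H2 (n+1) * 2 + (H (n+1)^2 + H2 (n+1))/2)
          * (-(1/((n:ℝ)+1))) := by
        rw [← hS]
    _ = (3 * H2 n - H n ^ 2) / (2 * ((n : ℝ) + 1)) := by
        rw [Hsucc, H2succ]
        field_simp
        ring
end

section
/- For every natural number n and every natural number s ≥ 1, ∑_{k=0}^{n} H_{n−k} / ((k+s)(k+1+s)) = ((n+1)/(s(n+1+s))) · H_{n+1} − (H_{n+s} − H_{s−1}) / (n+1+s), as an identity of real numbers. -/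
open Finset
lemma H_succ (m : ℕ) : H (m + 1) = H m + 1 / (m + 1) := by
  simp [H, Finset.sum_range_succ]

theorem stmt_10 (n : ℕ) (s : ℕ) (hs : 1 ≤ s) :
    ∑ k ∈ range (n + 1), H (n - k) / (((k : ℝ) + s) * ((k : ℝ) + 1 + s)) =
      (((n : ℝ) + 1) / ((s : ℝ) * ((n : ℝ) + 1 + s))) * H (n + 1) -
        (H (n + s) - H (s - 1)) / ((n : ℝ) + 1 + s) := by
  induction n generalizing s with
  | zero =>
    obtain ⟨t, rfl⟩ : ∃ t, s = t + 1 := ⟨s - 1, (Nat.succ_pred_eq_of_pos hs).symm⟩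
    have ht : (0:ℝ) < (t:ℝ) + 1 := by positivity
    have ht2 : (0:ℝ) < (t:ℝ) + 2 := by positivity
    simp only [Finset.sum_range_one, Nat.add_sub_cancel, zero_add, H_succ]
    have h0 : H 0 = 0 := by simp [H]
    push_cast
    rw [h0]
    field_simp
    ring
  | succ n ih =>
    obtain ⟨t, rfl⟩ : ∃ t, s = t + 1 := ⟨s - 1, (Nat.succ_pred_eq_of_pos hs).symm⟩
    have key := ih (t + 2) (by omega)
    rw [Finset.sum_range_succ']
    have hsum : ∑ k ∈ range (n + 1),
        H (n + 1 - (k + 1)) / ((((k + 1 : ℕ) : ℝ) + ((t + 1 : ℕ) : ℝ)) * (((k + 1 : ℕ) : ℝ) + 1 + ((t + 1 : ℕ) : ℝ))) =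
        ∑ k ∈ range (n + 1), H (n - k) / (((k : ℝ) + ((t + 2 : ℕ) : ℝ)) * ((k : ℝ) + 1 + ((t + 2 : ℕ) : ℝ))) := by
      refine Finset.sum_congr rfl fun k _ => ?_
      rw [Nat.succ_sub_succ]
      push_cast
      ring_nf
    rw [hsum, key]
    have e1 : n + (t + 2) = n + 1 + (t + 1) := by omega
    rw [e1] at *
    have e2 : t + 2 - 1 = t + 1 := by omega
    rw [e2]
    have e3 : t + 1 - 1 = t := by omega
    rw [e3]
    rw [show n + 1 - 0 = n + 1 from rfl, H_succ t, H_succ (n + 1)]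
    push_cast
    have h1 : (t:ℝ) + 1 ≠ 0 := by positivity
    have h2 : (t:ℝ) + 2 ≠ 0 := by positivity
    have h3 : (n:ℝ) + 2 ≠ 0 := by positivity
    have h4 : (n:ℝ) + (t:ℝ) + 3 ≠ 0 := by positivity
    field_simp
    ring
end
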